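/- Let λ_1, …, λ_N ∈ ℝ and let z̃ = Ẽ + iη̃ with η̃ > 0. Suppose there exists a ∈ ℝ, a ≥ 1, such that Im[(1/N) Σ_i 1/(λ_i - Ẽ - i·s)] ≤ a for all s with η̃ ≤ s ≤ 1. Then (1/N) Σ_{i=1}^N 1/|λ_i - z̃| ≤ C(1 + a · log(1/η̃) + a) for some universal constant C, where log denotes the base-2 logarithm (assuming 0 < η̃ < 1). -/

import Mathlib

open Finset

set_option maxHeartbeats 1000000 in
/-- Dyadic decomposition estimate for the sum of moduli of resolvent kernels. -/
theorem dyadic_resolvent_sum_bound :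
    ∃ C : ℝ, 0 < C ∧
      ∀ (N : ℕ) (lam : Fin N → ℝ) (Etil ηtil a : ℝ),
        0 < ηtil → ηtil < 1 → 1 ≤ a →
        (∀ s : ℝ, ηtil ≤ s → s ≤ 1 →
          ((1 / (N : ℂ)) * ∑ i, 1 / ((lam i : ℂ) - (Etil + s * Complex.I))).im ≤ a) →
        (1 / (N : ℝ)) * ∑ i, 1 / ‖(lam i : ℂ) - (Etil + ηtil * Complex.I)‖
          ≤ C * (1 + a * Real.logb 2 (1 / ηtil) + a) := by
  classical
  refine ⟨16, by norm_num, ?_⟩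
  intro N lam Etil ηtil a hη hη1 ha hyp
  set L := Real.logb 2 (1 / ηtil) with hL
  have hLnn : 0 ≤ L := by
    apply Real.logb_nonneg (by norm_num)
    exact one_le_one_div hη hη1.le
  set f : Fin N → ℝ → ℝ := fun i s => s / ((lam i - Etil) ^ 2 + s ^ 2) with hfdef
  have hfpos : ∀ (i : Fin N) (s : ℝ), 0 < s → 0 < f i s := by
    intro i s hs
    exact div_pos hs (by positivity)
  -- Step A: the hypothesis in real form
  have hA : ∀ s : ℝ, ηtil ≤ s → s ≤ 1 → (1 / (N : ℝ)) * ∑ i, f i s ≤ a := by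
    intro s hs1 hs2
    have h := hyp s hs1 hs2
    have heq : ((1 / (N : ℂ)) * ∑ i, 1 / ((lam i : ℂ) - (Etil + s * Complex.I))).im
        = (1 / (N : ℝ)) * ∑ i, f i s := by
      have h1 : (1 / (N : ℂ)) = (((1 / N : ℝ)) : ℂ) := by push_cast; ring
      rw [h1, Complex.im_ofReal_mul]
      congr 1
      rw [Complex.im_sum]
      refine Finset.sum_congr rfl fun i _ => ?_
      rw [one_div, Complex.inv_im, Complex.normSq_apply]
      have hre : ((lam i : ℂ) - (Etil + s * Complex.I)).re = lam i - Etil := by simp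
      have him : ((lam i : ℂ) - (Etil + s * Complex.I)).im = -s := by simp
      rw [hre, him, hfdef]
      ring
    rw [heq] at h
    exact h
  -- dyadic scales
  set K := Nat.ceil L with hKdef
  have h2K : 1 / ηtil ≤ (2 : ℝ) ^ K := by
    calc 1 / ηtil = (2 : ℝ) ^ L := (Real.rpow_logb (by norm_num) (by norm_num) (by positivity)).symm
      _ ≤ (2 : ℝ) ^ ((K : ℕ) : ℝ) :=
          Real.rpow_le_rpow_of_exponent_le (by norm_num) (Nat.le_ceil _)
      _ = (2 : ℝ) ^ K := by rw [Real.rpow_natCast]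
  set sval : ℕ → ℝ := fun n => min ((2 : ℝ) ^ n * ηtil) 1 with hsvaldef
  have hone_le_pow : ∀ n : ℕ, (1 : ℝ) ≤ 2 ^ n := fun n => one_le_pow₀ (by norm_num)
  have hsval_lb : ∀ n, ηtil ≤ sval n := by
    intro n
    exact le_min (le_mul_of_one_le_left hη.le (hone_le_pow n)) hη1.le
  have hsval_ub : ∀ n, sval n ≤ 1 := fun n => min_le_right _ _
  have hsval_pos : ∀ n, 0 < sval n := fun n => lt_of_lt_of_le hη (hsval_lb n)
  -- key scale selection
  have hkey : ∀ i : Fin N, |lam i - Etil| ≤ 1 →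
      ∃ n ≤ K, max |lam i - Etil| ηtil ≤ sval n ∧ sval n ≤ 2 * max |lam i - Etil| ηtil := by
    intro i hdi
    set m := max |lam i - Etil| ηtil with hm
    have hm0 : 0 < m := lt_of_lt_of_le hη (le_max_right _ _)
    have hm1 : m ≤ 1 := max_le hdi hη1.le
    have hmeta : ηtil ≤ m := le_max_right _ _
    have hex : ∃ n, m ≤ (2 : ℝ) ^ n * ηtil := by
      refine ⟨K, hm1.trans ?_⟩
      rw [div_le_iff₀ hη] at h2K
      linarith
    set n := Nat.find hex with hn
    have hn1 : m ≤ (2 : ℝ) ^ n * ηtil := Nat.find_spec hex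
    have hnK : n ≤ K := by
      apply Nat.find_le
      rw [div_le_iff₀ hη] at h2K
      linarith [hm1]
    refine ⟨n, hnK, le_min hn1 hm1, ?_⟩
    rcases Nat.eq_zero_or_pos n with h0 | hpos
    · have hs0 : sval n ≤ ηtil := by
        rw [h0]
        calc sval 0 ≤ (2 : ℝ) ^ 0 * ηtil := min_le_left _ _
          _ = ηtil := by norm_num
      linarith
    · have hmin : ¬ (m ≤ (2 : ℝ) ^ (n - 1) * ηtil) := Nat.find_min hex (Nat.sub_lt hpos one_pos)
      push_neg at hmin
      have h2 : (2 : ℝ) ^ n = 2 * (2 : ℝ) ^ (n - 1) := by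
        rw [← pow_succ']
        congr 1
        omega
      have : sval n ≤ (2 : ℝ) ^ n * ηtil := min_le_left _ _
      rw [h2] at this
      nlinarith
  -- the modulus as a square root
  have habs : ∀ i : Fin N, ‖(lam i : ℂ) - (Etil + ηtil * Complex.I)‖
      = Real.sqrt ((lam i - Etil) ^ 2 + ηtil ^ 2) := by
    intro i
    rw [Complex.norm_def, Complex.normSq_apply]
    have hre : ((lam i : ℂ) - (Etil + ηtil * Complex.I)).re = lam i - Etil := by simp
    have him : ((lam i : ℂ) - (Etil + ηtil * Complex.I)).im = -ηtil := by simp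
    rw [hre, him]
    congr 1
    ring
  -- per-index bound
  have hib : ∀ i : Fin N, 1 / ‖(lam i : ℂ) - (Etil + ηtil * Complex.I)‖
      ≤ 1 + 8 * ∑ n ∈ range (K + 1), f i (sval n) := by
    intro i
    have hsum0 : 0 ≤ ∑ n ∈ range (K + 1), f i (sval n) :=
      Finset.sum_nonneg fun n _ => (hfpos i _ (hsval_pos n)).le
    rw [habs i]
    by_cases hdi : |lam i - Etil| ≤ 1
    · obtain ⟨n, hnK, h1, h2⟩ := hkey i hdi
      set m := max |lam i - Etil| ηtil with hm
      have hm0 : 0 < m := lt_of_lt_of_le hη (le_max_right _ _)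
      have hs0 : 0 < sval n := hsval_pos n
      have hd : |lam i - Etil| ≤ m := le_max_left _ _
      -- m ≤ sqrt(d² + η²)
      have hmsq : m ^ 2 ≤ (lam i - Etil) ^ 2 + ηtil ^ 2 := by
        rcases max_cases |lam i - Etil| ηtil with ⟨he, _⟩ | ⟨he, _⟩ <;>
          rw [hm, he] <;> nlinarith [sq_abs (lam i - Etil), sq_nonneg (lam i - Etil), sq_nonneg ηtil]
      have hmsqrt : m ≤ Real.sqrt ((lam i - Etil) ^ 2 + ηtil ^ 2) := by
        rw [show m = Real.sqrt (m ^ 2) from (Real.sqrt_sq hm0.le).symm]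
        exact Real.sqrt_le_sqrt hmsq
      have hstep1 : 1 / Real.sqrt ((lam i - Etil) ^ 2 + ηtil ^ 2) ≤ 1 / m :=
        one_div_le_one_div_of_le hm0 hmsqrt
      -- 1/m ≤ 8 * f i (sval n)
      have hd2sq : (lam i - Etil) ^ 2 ≤ m ^ 2 := by
        rw [← sq_abs]
        exact pow_le_pow_left₀ (abs_nonneg _) hd 2
      have hs2sq : (sval n) ^ 2 ≤ 4 * m ^ 2 := by nlinarith [h2, hs0.le, hm0.le]
      have hms : m ^ 2 ≤ sval n * m := by nlinarith [h1, hm0.le]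
      have hden : (lam i - Etil) ^ 2 + (sval n) ^ 2 ≤ 8 * sval n * m := by
        nlinarith [mul_nonneg hs0.le hm0.le]
      have hdenpos : (0 : ℝ) < (lam i - Etil) ^ 2 + (sval n) ^ 2 := by positivity
      have hstep2 : sval n / (8 * sval n * m) ≤ f i (sval n) := by
        rw [hfdef]
        exact div_le_div_of_nonneg_left hs0.le hdenpos hden
      have hstep3 : sval n / (8 * sval n * m) = 1 / (8 * m) := by
        field_simp
      have hstep4 : 1 / m ≤ 8 * f i (sval n) := by
        rw [hstep3] at hstep2
        have h8 : 1 / m = 8 * (1 / (8 * m)) := by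
          field_simp
        rw [h8]
        linarith
      have hsingle : f i (sval n) ≤ ∑ k ∈ range (K + 1), f i (sval k) := by
        apply Finset.single_le_sum (f := fun k => f i (sval k))
          (fun k _ => (hfpos i _ (hsval_pos k)).le)
        simpa using Nat.lt_succ_of_le hnK
      calc 1 / Real.sqrt ((lam i - Etil) ^ 2 + ηtil ^ 2) ≤ 1 / m := hstep1
        _ ≤ 8 * f i (sval n) := hstep4
        _ ≤ 8 * ∑ k ∈ range (K + 1), f i (sval k) := by linarith [hsingle]
        _ ≤ 1 + 8 * ∑ k ∈ range (K + 1), f i (sval k) := by linarith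
    · push_neg at hdi
      have h1 : (1 : ℝ) ≤ (lam i - Etil) ^ 2 + ηtil ^ 2 := by
        nlinarith [sq_abs (lam i - Etil), sq_nonneg ηtil]
      have h2 : (1 : ℝ) ≤ Real.sqrt ((lam i - Etil) ^ 2 + ηtil ^ 2) := by
        rw [show (1 : ℝ) = Real.sqrt 1 from (Real.sqrt_one).symm]
        exact Real.sqrt_le_sqrt h1
      have h3 : 1 / Real.sqrt ((lam i - Etil) ^ 2 + ηtil ^ 2) ≤ 1 := by
        rw [div_le_one (by linarith)]
        exact h2
      linarith
  -- combine
  rcases Nat.eq_zero_or_pos N with hN | hN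
  · subst hN
    simp only [Nat.cast_zero, Finset.univ_eq_empty, Finset.sum_empty, mul_zero]
    nlinarith [hLnn, ha, mul_nonneg (le_trans zero_le_one ha) hLnn]
  · have hN0 : (0 : ℝ) < N := by exact_mod_cast hN
    have hsum : ∑ i, 1 / ‖(lam i : ℂ) - (Etil + ηtil * Complex.I)‖
        ≤ N + 8 * ∑ n ∈ range (K + 1), ∑ i, f i (sval n) := by
      calc ∑ i, 1 / ‖(lam i : ℂ) - (Etil + ηtil * Complex.I)‖
          ≤ ∑ i, (1 + 8 * ∑ n ∈ range (K + 1), f i (sval n)) :=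
            Finset.sum_le_sum fun i _ => hib i
        _ = N + 8 * ∑ i, ∑ n ∈ range (K + 1), f i (sval n) := by
            rw [Finset.sum_add_distrib, Finset.sum_const, Finset.card_univ, Fintype.card_fin,
              ← Finset.mul_sum]
            simp
        _ = N + 8 * ∑ n ∈ range (K + 1), ∑ i, f i (sval n) := by rw [Finset.sum_comm]
    have hfinal : (1 / (N : ℝ)) * ∑ i, 1 / ‖(lam i : ℂ) - (Etil + ηtil * Complex.I)‖
        ≤ 1 + 8 * (((K : ℝ) + 1) * a) := by
      have hstep : (1 / (N : ℝ)) * ∑ i, 1 / ‖(lam i : ℂ) - (Etil + ηtil * Complex.I)‖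
          ≤ (1 / (N : ℝ)) * (N + 8 * ∑ n ∈ range (K + 1), ∑ i, f i (sval n)) :=
        mul_le_mul_of_nonneg_left hsum (by positivity)
      have gen : ∀ (c : ℝ) (g : ℕ → ℝ),
          c * ((N : ℝ) + 8 * ∑ n ∈ range (K + 1), g n)
            = c * N + 8 * ∑ n ∈ range (K + 1), c * g n := by
        intro c g
        rw [← Finset.mul_sum]
        ring
      have heq2 : (1 / (N : ℝ)) * (N + 8 * ∑ n ∈ range (K + 1), ∑ i, f i (sval n))
          = 1 + 8 * ∑ n ∈ range (K + 1), (1 / (N : ℝ)) * ∑ i, f i (sval n) := by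
        rw [gen (1 / (N : ℝ)) (fun n => ∑ i, f i (sval n)), one_div_mul_cancel hN0.ne']
      have hbd : ∑ n ∈ range (K + 1), (1 / (N : ℝ)) * ∑ i, f i (sval n)
          ≤ ∑ n ∈ range (K + 1), a :=
        Finset.sum_le_sum fun n _ => hA (sval n) (hsval_lb n) (hsval_ub n)
      have : ∑ n ∈ range (K + 1), (a : ℝ) = ((K : ℝ) + 1) * a := by
        rw [Finset.sum_const, Finset.card_range]
        push_cast
        ring
      rw [this] at hbd
      calc (1 / (N : ℝ)) * ∑ i, 1 / ‖(lam i : ℂ) - (Etil + ηtil * Complex.I)‖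
          ≤ (1 / (N : ℝ)) * (N + 8 * ∑ n ∈ range (K + 1), ∑ i, f i (sval n)) := hstep
        _ = 1 + 8 * ∑ n ∈ range (K + 1), (1 / (N : ℝ)) * ∑ i, f i (sval n) := heq2
        _ ≤ 1 + 8 * (((K : ℝ) + 1) * a) := by linarith
    have hKle : (K : ℝ) ≤ L + 1 := le_of_lt (Nat.ceil_lt_add_one hLnn)
    have ha0 : (0 : ℝ) < a := lt_of_lt_of_le one_pos ha
    calc (1 / (N : ℝ)) * ∑ i, 1 / ‖(lam i : ℂ) - (Etil + ηtil * Complex.I)‖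
        ≤ 1 + 8 * (((K : ℝ) + 1) * a) := hfinal
      _ ≤ 16 * (1 + a * L + a) := by
          have h8 : (K : ℝ) * a ≤ (L + 1) * a := mul_le_mul_of_nonneg_right hKle ha0.le
          nlinarith [h8, mul_nonneg ha0.le hLnn, ha]
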